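/- For every finite simple graph G and every maximum independent set I_M of G, ker(G) ⊆ I_M; consequently ker(G) ⊆ core(G). -/

import Mathlib

variable {V : Type*} [Fintype V] [DecidableEq V]

/-- `S` is an independent set of `G`. -/
def IsIndep (G : SimpleGraph V) (S : Set V) : Prop :=
  ∀ ⦃u⦄, u ∈ S → ∀ ⦃v⦄, v ∈ S → ¬ G.Adj u v

/-- The independence number `α(G)`: the maximum cardinality of an independent set. -/
noncomputable def indepNum (G : SimpleGraph V) : ℕ :=
  sSup {n : ℕ | ∃ S : Set V, IsIndep G S ∧ S.ncard = n}

/-- `S` is a maximum independent set of `G`. -/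
def IsMaxIndep (G : SimpleGraph V) (S : Set V) : Prop :=
  IsIndep G S ∧ ∀ T : Set V, IsIndep G T → T.ncard ≤ S.ncard

/-- The neighborhood `N(X)` of a set of vertices `X`. -/
def nbhdSet (G : SimpleGraph V) (X : Set V) : Set V :=
  {v | ∃ u ∈ X, G.Adj u v}

/-- The difference `d_G(X) = |X| - |N(X)|` of a vertex set `X`. -/
noncomputable def diffSet (G : SimpleGraph V) (X : Set V) : ℤ :=
  (X.ncard : ℤ) - ((nbhdSet G X).ncard : ℤ)

/-- `I` is a critical independent set of `G`. -/
def IsCriticalIndep (G : SimpleGraph V) (I : Set V) : Prop :=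
  IsIndep G I ∧ ∀ J : Set V, IsIndep G J → diffSet G J ≤ diffSet G I

/-- `I` is a maximum-cardinality critical independent set of `G`. -/
def IsMaxCriticalIndep (G : SimpleGraph V) (I : Set V) : Prop :=
  IsCriticalIndep G I ∧ ∀ J : Set V, IsCriticalIndep G J → J.ncard ≤ I.ncard

/-- `core(G)`: the intersection of all maximum independent sets of `G`. -/
def coreSet (G : SimpleGraph V) : Set V := ⋂₀ {S : Set V | IsMaxIndep G S}

/-- `corona(G)`: the union of all maximum independent sets of `G`. -/
def coronaSet (G : SimpleGraph V) : Set V := ⋃₀ {S : Set V | IsMaxIndep G S}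

/-- `ker(G)`: the intersection of all critical independent sets of `G`. -/
def kerSet (G : SimpleGraph V) : Set V := ⋂₀ {S : Set V | IsCriticalIndep G S}

/-- `diadem(G)`: the union of all critical independent sets of `G`. -/
def diademSet (G : SimpleGraph V) : Set V := ⋃₀ {S : Set V | IsCriticalIndep G S}

/-- `nucleus(G)`: the intersection of all maximum-cardinality critical independent
sets of `G`. -/
def nucleusSet (G : SimpleGraph V) : Set V := ⋂₀ {S : Set V | IsMaxCriticalIndep G S}

/-- `C` is the vertex set of some odd cycle of `G`. -/
def IsOddCycleVertexSet (G : SimpleGraph V) (C : Set V) : Prop :=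
  ∃ (v : V) (w : G.Walk v v), w.IsCycle ∧ Odd w.length ∧ {x | x ∈ w.support} = C

/-- The maximum cardinality of a set of pairwise vertex-distinct odd cycles of `G`,
i.e. the number of distinct vertex sets of odd cycles of `G`. -/
noncomputable def numVertexDistinctOddCycles (G : SimpleGraph V) : ℕ :=
  {C : Set V | IsOddCycleVertexSet G C}.ncard

/-- `E` is the edge set of some odd cycle of `G`. -/
def IsOddCycleEdgeSet (G : SimpleGraph V) (E : Set (Sym2 V)) : Prop :=
  ∃ (v : V) (w : G.Walk v v), w.IsCycle ∧ Odd w.length ∧ {e | e ∈ w.edges} = E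

/-- The number of (distinct) odd cycles of `G`, where a cycle is identified with
its edge set. -/
noncomputable def numOddCycles (G : SimpleGraph V) : ℕ :=
  {E : Set (Sym2 V) | IsOddCycleEdgeSet G E}.ncard

lemma nbhd_mono (G : SimpleGraph V) {s t : Set V} (h : s ⊆ t) :
    nbhdSet G s ⊆ nbhdSet G t := by
  rintro v ⟨u, hu, huv⟩; exact ⟨u, h hu, huv⟩

lemma exists_critical (G : SimpleGraph V) : ∃ A, IsCriticalIndep G A := by
  obtain ⟨A, hA, hmax⟩ := Set.Finite.exists_maximalFor (diffSet G)
    {S : Set V | IsIndep G S} (Set.toFinite _)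
    ⟨∅, fun u hu => (Set.notMem_empty u hu).elim⟩
  refine ⟨A, hA, fun J hJ => ?_⟩
  by_contra h
  push_neg at h
  exact absurd (hmax hJ h.le) (not_le.mpr h)

lemma critical_inter (G : SimpleGraph V) {A S : Set V}
    (hA : IsCriticalIndep G A) (hS : IsMaxIndep G S) :
    IsCriticalIndep G (A ∩ S) := by
  set J := A ∩ S with hJdef
  set X := A \ S with hXdef
  set Y := nbhdSet G A \ nbhdSet G J with hYdef
  have hNJ : nbhdSet G J ⊆ nbhdSet G A := nbhd_mono G Set.inter_subset_left
  have hSNJ : ∀ v ∈ S, v ∉ nbhdSet G J := by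
    rintro v hv ⟨u, hu, huv⟩
    exact hS.1 hu.2 hv huv
  have hS' : IsIndep G ((S \ nbhdSet G X) ∪ X) := by
    rintro u hu v hv hadj
    rcases hu with hu | hu <;> rcases hv with hv | hv
    · exact hS.1 hu.1 hv.1 hadj
    · exact hu.2 ⟨v, hv, hadj.symm⟩
    · exact hv.2 ⟨u, hu, hadj⟩
    · exact hA.1 hu.1 hv.1 hadj
  have hcard := hS.2 _ hS'
  have hdisj : Disjoint (S \ nbhdSet G X) X := by
    rw [Set.disjoint_left]; rintro v ⟨hv, _⟩ hvX; exact hvX.2 hv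
  rw [Set.ncard_union_eq hdisj (Set.toFinite _) (Set.toFinite _)] at hcard
  have hSsplit : (S ∩ nbhdSet G X).ncard + (S \ nbhdSet G X).ncard = S.ncard := by
    rw [← Set.ncard_union_eq (Set.disjoint_of_subset_left Set.inter_subset_right
      Set.disjoint_sdiff_right) (Set.toFinite _) (Set.toFinite _), Set.inter_union_diff]
  have hXle : X.ncard ≤ (S ∩ nbhdSet G X).ncard := by omega
  have hsub : S ∩ nbhdSet G X ⊆ Y := by
    rintro v ⟨hvS, hvNX⟩
    exact ⟨nbhd_mono G Set.diff_subset hvNX, fun h => hSNJ v hvS h⟩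
  have hXY : X.ncard ≤ Y.ncard :=
    hXle.trans (Set.ncard_le_ncard hsub (Set.toFinite _))
  have hAsplit : J.ncard + X.ncard = A.ncard := by
    rw [← Set.ncard_union_eq (Set.disjoint_of_subset_left Set.inter_subset_right
      Set.disjoint_sdiff_right) (Set.toFinite _) (Set.toFinite _), Set.inter_union_diff]
  have hNsplit : (nbhdSet G J).ncard + Y.ncard = (nbhdSet G A).ncard := by
    rw [← Set.ncard_union_eq Set.disjoint_sdiff_right (Set.toFinite _) (Set.toFinite _),
      Set.union_diff_cancel hNJ]
  have hJindep : IsIndep G J := fun u hu v hv => hA.1 hu.1 hv.1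
  refine ⟨hJindep, fun K hK => ?_⟩
  have h1 := hA.2 K hK
  have h2 : diffSet G A ≤ diffSet G J := by
    unfold diffSet
    omega
  exact h1.trans h2

/-- For every finite simple graph `G` and every maximum
independent set `I_M` of `G`, `ker(G) ⊆ I_M`; consequently `ker(G) ⊆ core(G)`. -/
theorem ker_subset_maxIndep_and_core (G : SimpleGraph V) :
    (∀ IM : Set V, IsMaxIndep G IM → kerSet G ⊆ IM) ∧ kerSet G ⊆ coreSet G := by
  have main : ∀ IM : Set V, IsMaxIndep G IM → kerSet G ⊆ IM := by
    intro S hS x hx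
    obtain ⟨A, hA⟩ := exists_critical G
    have hJ := critical_inter G hA hS
    exact (Set.mem_sInter.mp hx _ hJ).2
  exact ⟨main, fun x hx => Set.mem_sInter.mpr fun S hSm => main S hSm hx⟩
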